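/- Let N be a nontrivial f-near-ring satisfying the DCCN which is simple and not left distributive (there exist a, b, c : N with a*(b+c) ≠ a*b + a*c). Then every nonzero element of N is a unit, i.e. N is a near-field. -/

import Mathlib

private def mkSub {N : Type*} [AddGroup N] (s : Set N) (h0 : (0:N) ∈ s)
    (hadd : ∀ a b : N, a ∈ s → b ∈ s → a + b ∈ s)
    (hneg : ∀ a : N, a ∈ s → -a ∈ s) : AddSubgroup N where
  carrier := s
  zero_mem' := h0
  add_mem' := fun ha hb => hadd _ _ ha hb
  neg_mem' := fun ha => hneg _ ha

/-- From the DCC we can extract minimal elements of any nonempty family of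
`N`-closed additive subgroups. -/
private lemma exists_min {N : Type*} [AddGroup N] [Mul N]
    (hdcc : ∀ f : ℕ → AddSubgroup N, Antitone f →
      (∀ i : ℕ, ∀ n : N, ∀ m ∈ f i, n * m ∈ f i) →
      ∃ k : ℕ, ∀ j ≥ k, f j = f k)
    (S : Set (AddSubgroup N))
    (hS : ∀ H ∈ S, ∀ n : N, ∀ m ∈ H, n * m ∈ H)
    (hne : S.Nonempty) :
    ∃ H ∈ S, ∀ H' ∈ S, H' ≤ H → H' = H := by
  by_contra hcon
  push_neg at hcon
  obtain ⟨H₀, hH₀⟩ := hne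
  choose F hFS hFle hFne using hcon
  let step : {H : AddSubgroup N // H ∈ S} → {H : AddSubgroup N // H ∈ S} :=
    fun H => ⟨F H.1 H.2, hFS H.1 H.2⟩
  let f : ℕ → {H : AddSubgroup N // H ∈ S} := fun n => step^[n] ⟨H₀, hH₀⟩
  have hstep : ∀ n, f (n+1) = step (f n) := fun n => Function.iterate_succ_apply' step n _
  have hlt : ∀ n, (f (n+1)).1 < (f n).1 := by
    intro n
    rw [hstep n]
    exact lt_of_le_of_ne (hFle _ _) (hFne _ _)
  obtain ⟨k, hk⟩ := hdcc (fun n => (f n).1)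
    (antitone_nat_of_succ_le fun n => (hlt n).le)
    (fun i => hS _ (f i).2)
  exact (hlt k).ne (hk (k+1) (Nat.le_succ k))

/-- A simple f-near-ring with DCCN which is not left distributive
is a near-field. -/
theorem stmt15 {N : Type*} [AddGroup N] [Mul N] [One N]
    (hassoc : ∀ a b c : N, (a * b) * c = a * (b * c))
    (hdist : ∀ a b c : N, (a + b) * c = a * c + b * c)
    (honel : ∀ a : N, 1 * a = a) (honer : ∀ a : N, a * 1 = a)
    (hzero : ∀ a : N, a * 0 = 0)
    (hf : ∀ u : N, (∃ v : N, u * v = 1 ∧ v * u = 1) → u ≠ 1 →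
      ∀ n : N, n * u = n → n = 0)
    (hnt : (0 : N) ≠ 1)
    (hdcc : ∀ f : ℕ → AddSubgroup N, Antitone f →
      (∀ i : ℕ, ∀ n : N, ∀ m ∈ f i, n * m ∈ f i) →
      ∃ k : ℕ, ∀ j ≥ k, f j = f k)
    (hsimple : ∀ I : AddSubgroup N,
      (∀ n : N, ∀ i ∈ I, n + i - n ∈ I) →
      (∀ i ∈ I, ∀ n : N, i * n ∈ I) →
      (∀ n m : N, ∀ i ∈ I, n * (m + i) - n * m ∈ I) →
      I = ⊥ ∨ I = ⊤)
    (hnld : ∃ a b c : N, a * (b + c) ≠ a * b + a * c) :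
    ∀ x : N, x ≠ 0 → ∃ y : N, x * y = 1 ∧ y * x = 1 := by
  classical
  -- basic arithmetic facts
  have h0l : ∀ a : N, 0 * a = 0 := by
    intro a
    have h := hdist 0 0 a
    rw [add_zero] at h
    exact (left_eq_add.mp h)
  have hnegl : ∀ a b : N, (-a) * b = -(a * b) := by
    intro a b
    have h := hdist a (-a) b
    rw [add_neg_cancel, h0l] at h
    exact (neg_eq_of_add_eq_zero_right h.symm).symm
  have hsubl : ∀ a b c : N, (a - b) * c = a * c - b * c := by
    intro a b c
    rw [sub_eq_add_neg, sub_eq_add_neg, hdist, hnegl]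
  -- nonzero subgroups contain a nonzero element
  have hnonbot : ∀ H : AddSubgroup N, H ≠ ⊥ → ∃ x ∈ H, x ≠ 0 := by
    intro H hH
    by_contra hcon
    push_neg at hcon
    exact hH ((AddSubgroup.eq_bot_iff_forall H).mpr hcon)
  -- a minimal nonzero N-closed subgroup M
  have htopS₁ : (∀ n : N, ∀ m ∈ (⊤ : AddSubgroup N), n * m ∈ (⊤ : AddSubgroup N)) ∧
      (⊤ : AddSubgroup N) ≠ ⊥ := by
    constructor
    · intro n m _; trivial
    · intro h
      have h1 : (1 : N) ∈ (⊤ : AddSubgroup N) := trivial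
      rw [h, AddSubgroup.mem_bot] at h1
      exact hnt h1.symm
  obtain ⟨M, hMS₁, hMmin⟩ := exists_min hdcc
    {H | (∀ n : N, ∀ m ∈ H, n * m ∈ H) ∧ H ≠ ⊥}
    (fun H hH => hH.1) ⟨⊤, htopS₁⟩
  obtain ⟨hMcl, hMbot⟩ := hMS₁
  -- faithfulness : if n kills all of M then n = 0
  have hfaith : ∀ n : N, (∀ m ∈ M, n * m = 0) → n = 0 := by
    intro n₀ hn₀
    set I : AddSubgroup N := mkSub {n : N | ∀ m ∈ M, n * m = 0}
      (by intro m _; exact h0l m)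
      (by intro a b ha hb m hm; rw [hdist, ha m hm, hb m hm, add_zero])
      (by intro a ha m hm; rw [hnegl, ha m hm, neg_zero]) with hIdef
    have hI := hsimple I
      (by -- normality
        intro n i hi m hm
        show (n + i - n) * m = 0
        rw [hsubl, hdist, hi m hm, add_zero, sub_self])
      (by -- right ideal
        intro i hi n m hm
        show (i * n) * m = 0
        rw [hassoc, hi (n * m) (hMcl n m hm)])
      (by -- left condition
        intro n m i hi m' hm'
        show (n * (m + i) - n * m) * m' = 0
        rw [hsubl, hassoc, hassoc, hdist, hi m' hm', add_zero, sub_self])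
    rcases hI with hbot | htop
    · have : n₀ ∈ I := hn₀
      rw [hbot, AddSubgroup.mem_bot] at this
      exact this
    · exfalso
      have h1 : (1 : N) ∈ I := by rw [htop]; trivial
      have : ∀ m ∈ M, m = 0 := by
        intro m hm
        have := h1 m hm
        rwa [honel] at this
      exact hMbot ((AddSubgroup.eq_bot_iff_forall M).mpr this)
  -- there is a finite list of nonzero elements of M with trivial joint annihilator
  let annL : List N → AddSubgroup N := fun l => mkSub {n : N | ∀ x ∈ l, n * x = 0}
    (by intro x _; exact h0l x)
    (by intro a b ha hb x hx; rw [hdist, ha x hx, hb x hx, add_zero])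
    (by intro a ha x hx; rw [hnegl, ha x hx, neg_zero])
  have hannL_cl : ∀ (l : List N), ∀ n : N, ∀ m ∈ annL l, n * m ∈ annL l := by
    intro l n m hm x hx
    show (n * m) * x = 0
    rw [hassoc, hm x hx, hzero]
  have hexP : ∃ k : ℕ, ∃ l : List N, l.length = k ∧ (∀ x ∈ l, x ∈ M ∧ x ≠ 0) ∧
      (∀ n : N, (∀ x ∈ l, n * x = 0) → n = 0) := by
    obtain ⟨x₀, hx₀M, hx₀ne⟩ := hnonbot M hMbot
    have hS₂ne : Set.Nonempty {H : AddSubgroup N |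
        ∃ l : List N, (∀ x ∈ l, x ∈ M ∧ x ≠ 0) ∧ H = annL l} := by
      refine ⟨annL [x₀], ⟨[x₀], ?_, rfl⟩⟩
      intro x hx
      rw [List.mem_singleton] at hx
      subst hx
      exact ⟨hx₀M, hx₀ne⟩
    obtain ⟨J, hJS₂, hJmin⟩ := exists_min hdcc _
      (by rintro H ⟨l, _, rfl⟩; exact hannL_cl l) hS₂ne
    obtain ⟨l₁, hl₁ent, hl₁eq⟩ := hJS₂
    refine ⟨l₁.length, l₁, rfl, hl₁ent, ?_⟩
    intro n hn
    have hkillall : ∀ y ∈ M, n * y = 0 := by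
      intro y hy
      by_cases hy0 : y = 0
      · rw [hy0]; exact hzero n
      · have hsub : annL (y :: l₁) ∈ {H : AddSubgroup N |
            ∃ l : List N, (∀ x ∈ l, x ∈ M ∧ x ≠ 0) ∧ H = annL l} := by
          refine ⟨y :: l₁, ?_, rfl⟩
          intro x hx
          rcases List.mem_cons.mp hx with h | h
          · rw [h]; exact ⟨hy, hy0⟩
          · exact hl₁ent x h
        have hle : annL (y :: l₁) ≤ J := by
          rw [hl₁eq]
          intro a ha x hx
          exact ha x (List.mem_cons_of_mem y hx)
        have heq := hJmin _ hsub hle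
        have hnJ : n ∈ J := by rw [hl₁eq]; exact hn
        rw [← heq] at hnJ
        exact hnJ y (List.mem_cons_self)
    exact hfaith n hkillall
  -- take a minimal length such list
  obtain ⟨l₀, hlen, hent, hkill⟩ := Nat.find_spec hexP
  have hminP : ∀ m < Nat.find hexP, ¬ ∃ l : List N, l.length = m ∧
      (∀ x ∈ l, x ∈ M ∧ x ≠ 0) ∧ (∀ n : N, (∀ x ∈ l, n * x = 0) → n = 0) :=
    fun m hm => Nat.find_min hexP hm
  -- main claim: there is x* ∈ M, x* ≠ 0, with trivial annihilator
  have hP1 : ∃ x : N, x ∈ M ∧ x ≠ 0 ∧ ∀ n : N, n * x = 0 → n = 0 := by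
    match l₀, hlen, hent, hkill with
    | [], hlen, hent, hkill =>
      exfalso
      have h1 : (1 : N) = 0 := hkill 1 (by intro x hx; exact absurd hx (List.not_mem_nil))
      exact hnt h1.symm
    | [γ], hlen, hent, hkill =>
      obtain ⟨hγM, hγne⟩ := hent γ (List.mem_singleton.mpr rfl)
      refine ⟨γ, hγM, hγne, ?_⟩
      intro n hn
      apply hkill n
      intro x hx
      rw [List.mem_singleton] at hx
      subst hx
      exact hn
    | γ₁ :: γ₂ :: rest, hlen, hent, hkill =>
      exfalso
      obtain ⟨hγ₁M, hγ₁ne⟩ := hent γ₁ (List.mem_cons_self)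
      obtain ⟨hγ₂M, hγ₂ne⟩ := hent γ₂ (List.mem_cons_of_mem _ (List.mem_cons_self))
      have hrest_mem : ∀ x ∈ rest, x ∈ γ₁ :: γ₂ :: rest := fun x hx =>
        List.mem_cons_of_mem _ (List.mem_cons_of_mem _ hx)
      have hrest_ent : ∀ x ∈ rest, x ∈ M ∧ x ≠ 0 := fun x hx => hent x (hrest_mem x hx)
      have hshortlen : (γ₂ :: rest).length < Nat.find hexP := by
        rw [← hlen]
        simp
      have hshortlen' : (γ₁ :: rest).length < Nat.find hexP := by
        rw [← hlen]
        simp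
      -- γ₁ ≠ γ₂
      have hne12 : γ₁ ≠ γ₂ := by
        intro h12
        apply hminP (γ₂ :: rest).length hshortlen
        refine ⟨γ₂ :: rest, rfl, ?_, ?_⟩
        · intro x hx
          rcases List.mem_cons.mp hx with h | h
          · rw [h]; exact ⟨hγ₂M, hγ₂ne⟩
          · exact hrest_ent x h
        · intro n hn
          apply hkill n
          intro x hx
          rcases List.mem_cons.mp hx with h | h
          · rw [h, h12]; exact hn γ₂ (List.mem_cons_self)
          · rcases List.mem_cons.mp h with h' | h'
            · rw [h']; exact hn γ₂ (List.mem_cons_self)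
            · exact hn x (List.mem_cons_of_mem _ h')
      -- generic solving lemma: the annihilator of (γ' :: rest) acts fully on γ
      have hXfull : ∀ (γ γ' : N), γ ∈ M → γ' ∈ M → γ' ≠ 0 →
          ((γ' :: rest).length < Nat.find hexP) →
          (∀ n : N, (∀ x ∈ γ' :: rest, n * x = 0) → n * γ = 0 →
            (∀ x ∈ γ₁ :: γ₂ :: rest, n * x = 0)) →
          ∀ t ∈ M, ∃ j : N, (∀ x ∈ γ' :: rest, j * x = 0) ∧ j * γ = t := by
        intro γ γ' hγM hγ'M hγ'ne hγ'len hcover t ht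
        set X : AddSubgroup N := mkSub
          {y : N | ∃ j : N, (∀ x ∈ γ' :: rest, j * x = 0) ∧ y = j * γ}
          (⟨0, fun x _ => h0l x, (h0l γ).symm⟩)
          (by
            rintro a b ⟨j, hj, rfl⟩ ⟨j', hj', rfl⟩
            refine ⟨j + j', ?_, (hdist j j' γ).symm⟩
            intro x hx
            rw [hdist, hj x hx, hj' x hx, add_zero])
          (by
            rintro a ⟨j, hj, rfl⟩
            exact ⟨-j, fun x hx => by rw [hnegl, hj x hx, neg_zero], (hnegl j γ).symm⟩)
          with hXdef
        have hXcl : ∀ n : N, ∀ m ∈ X, n * m ∈ X := by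
          rintro n m ⟨j, hj, rfl⟩
          exact ⟨n * j, fun x hx => by rw [hassoc, hj x hx, hzero], (hassoc n j γ).symm⟩
        have hXle : X ≤ M := by
          rintro y ⟨j, hj, rfl⟩
          exact hMcl j γ hγM
        have hXbot : X ≠ ⊥ := by
          intro hb
          apply hminP (γ' :: rest).length hγ'len
          refine ⟨γ' :: rest, rfl, ?_, ?_⟩
          · intro x hx
            rcases List.mem_cons.mp hx with h | h
            · rw [h]; exact ⟨hγ'M, hγ'ne⟩
            · exact hrest_ent x h
          · intro n hn
            have hmem : n * γ ∈ X := ⟨n, hn, rfl⟩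
            rw [hb, AddSubgroup.mem_bot] at hmem
            exact hkill n (hcover n hn hmem)
        have hXM : X = M := hMmin X ⟨hXcl, hXbot⟩ hXle
        have htX : t ∈ X := by rw [hXM]; exact ht
        obtain ⟨j, hj, hjt⟩ := htX
        exact ⟨j, hj, hjt.symm⟩
      -- cover lemmas
      have hcover₁ : ∀ n : N, (∀ x ∈ γ₂ :: rest, n * x = 0) → n * γ₁ = 0 →
          (∀ x ∈ γ₁ :: γ₂ :: rest, n * x = 0) := by
        intro n hn h1 x hx
        rcases List.mem_cons.mp hx with h | h
        · rw [h]; exact h1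
        · exact hn x h
      have hcover₂ : ∀ n : N, (∀ x ∈ γ₁ :: rest, n * x = 0) → n * γ₂ = 0 →
          (∀ x ∈ γ₁ :: γ₂ :: rest, n * x = 0) := by
        intro n hn h2 x hx
        rcases List.mem_cons.mp hx with h | h
        · rw [h]; exact hn γ₁ (List.mem_cons_self)
        · rcases List.mem_cons.mp h with h' | h'
          · rw [h']; exact h2
          · exact hn x (List.mem_cons_of_mem _ h')
      -- pick the building blocks
      obtain ⟨j₁, hj₁kill, hj₁val⟩ := hXfull γ₁ γ₂ hγ₁M hγ₂M hγ₂ne hshortlen hcover₁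
        (-γ₁ + γ₂) (M.add_mem (M.neg_mem hγ₁M) hγ₂M)
      obtain ⟨j₂, hj₂kill, hj₂val⟩ := hXfull γ₂ γ₁ hγ₂M hγ₁M hγ₁ne hshortlen' hcover₂
        (-γ₂ + γ₁) (M.add_mem (M.neg_mem hγ₂M) hγ₁M)
      obtain ⟨n₁, hn₁kill, hn₁val⟩ := hXfull γ₁ γ₂ hγ₁M hγ₂M hγ₂ne hshortlen hcover₁ γ₁ hγ₁M
      obtain ⟨n₂, hn₂kill, hn₂val⟩ := hXfull γ₂ γ₁ hγ₂M hγ₁M hγ₁ne hshortlen' hcover₂ γ₁ hγ₁M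
      -- j₁ kills γ₂ and rest ; j₂ kills γ₁ and rest
      have hj₁γ₂ : j₁ * γ₂ = 0 := hj₁kill γ₂ (List.mem_cons_self)
      have hj₂γ₁ : j₂ * γ₁ = 0 := hj₂kill γ₁ (List.mem_cons_self)
      have hn₁γ₂ : n₁ * γ₂ = 0 := hn₁kill γ₂ (List.mem_cons_self)
      have hn₂γ₁ : n₂ * γ₁ = 0 := hn₂kill γ₁ (List.mem_cons_self)
      have hj₁rest : ∀ x ∈ rest, j₁ * x = 0 := fun x hx =>
        hj₁kill x (List.mem_cons_of_mem _ hx)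
      have hj₂rest : ∀ x ∈ rest, j₂ * x = 0 := fun x hx =>
        hj₂kill x (List.mem_cons_of_mem _ hx)
      have hn₁rest : ∀ x ∈ rest, n₁ * x = 0 := fun x hx =>
        hn₁kill x (List.mem_cons_of_mem _ hx)
      have hn₂rest : ∀ x ∈ rest, n₂ * x = 0 := fun x hx =>
        hn₂kill x (List.mem_cons_of_mem _ hx)
      -- the swap unit u and the fixed element n
      set u : N := 1 + j₁ + j₂ with hudef
      set nn : N := n₁ + n₂ with hnndef
      have hu1 : u * γ₁ = γ₂ := by
        rw [hudef, hdist, hdist, honel, hj₁val, hj₂γ₁, add_zero, add_neg_cancel_left]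
      have hu2 : u * γ₂ = γ₁ := by
        rw [hudef, hdist, hdist, honel, hj₁γ₂, hj₂val, add_zero, add_neg_cancel_left]
      have hur : ∀ x ∈ rest, u * x = x := by
        intro x hx
        rw [hudef, hdist, hdist, honel, hj₁rest x hx, hj₂rest x hx, add_zero, add_zero]
      have hnn1 : nn * γ₁ = γ₁ := by
        rw [hnndef, hdist, hn₁val, hn₂γ₁, add_zero]
      have hnn2 : nn * γ₂ = γ₁ := by
        rw [hnndef, hdist, hn₁γ₂, hn₂val, zero_add]
      have hnnr : ∀ x ∈ rest, nn * x = 0 := by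
        intro x hx
        rw [hnndef, hdist, hn₁rest x hx, hn₂rest x hx, add_zero]
      -- u * u = 1
      have huu : u * u = 1 := by
        have : u * u - 1 = 0 := by
          apply hkill
          intro x hx
          rcases List.mem_cons.mp hx with h | h
          · rw [h, hsubl, hassoc, hu1, hu2, honel, sub_self]
          · rcases List.mem_cons.mp h with h' | h'
            · rw [h', hsubl, hassoc, hu2, hu1, honel, sub_self]
            · rw [hsubl, hassoc, hur x h', hur x h', honel, sub_self]
        exact sub_eq_zero.mp this
      have hune : u ≠ 1 := by
        intro h
        apply hne12
        have := hu1
        rw [h, honel] at this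
        exact this
      -- nn * u = nn
      have hnnu : nn * u = nn := by
        have : nn * u - nn = 0 := by
          apply hkill
          intro x hx
          rcases List.mem_cons.mp hx with h | h
          · rw [h, hsubl, hassoc, hu1, hnn2, hnn1, sub_self]
          · rcases List.mem_cons.mp h with h' | h'
            · rw [h', hsubl, hassoc, hu2, hnn1, hnn2, sub_self]
            · rw [hsubl, hassoc, hur x h', sub_self]
        exact sub_eq_zero.mp this
      -- contradiction with the f-condition
      have hnn0 : nn = 0 := hf u ⟨u, huu, huu⟩ hune nn hnnu
      apply hγ₁ne
      rw [← hnn1, hnn0, h0l]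
  -- now finish: every nonzero N-closed subgroup is all of N
  obtain ⟨xs, hxsM, hxsne, hxsinj⟩ := hP1
  have hbig : ∀ H : AddSubgroup N, (∀ n : N, ∀ m ∈ H, n * m ∈ H) → H ≠ ⊥ →
      ∀ z : N, z ∈ H := by
    intro H hHcl hHne z
    set Hx : AddSubgroup N := mkSub {y : N | ∃ h : N, h ∈ H ∧ y = h * xs}
      (⟨0, H.zero_mem, (h0l xs).symm⟩)
      (by
        rintro a b ⟨h, hh, rfl⟩ ⟨h', hh', rfl⟩
        exact ⟨h + h', H.add_mem hh hh', (hdist h h' xs).symm⟩)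
      (by
        rintro a ⟨h, hh, rfl⟩
        exact ⟨-h, H.neg_mem hh, (hnegl h xs).symm⟩) with hHxdef
    have hHxcl : ∀ n : N, ∀ m ∈ Hx, n * m ∈ Hx := by
      rintro n m ⟨h, hh, rfl⟩
      exact ⟨n * h, hHcl n h hh, (hassoc n h xs).symm⟩
    have hHxle : Hx ≤ M := by
      rintro y ⟨h, hh, rfl⟩
      exact hMcl h xs hxsM
    have hHxbot : Hx ≠ ⊥ := by
      intro hb
      obtain ⟨h₀, hh₀, hh₀ne⟩ := hnonbot H hHne
      have hmem : h₀ * xs ∈ Hx := ⟨h₀, hh₀, rfl⟩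
      rw [hb, AddSubgroup.mem_bot] at hmem
      exact hh₀ne (hxsinj h₀ hmem)
    have hHxM : Hx = M := hMmin Hx ⟨hHxcl, hHxbot⟩ hHxle
    have hzxs : z * xs ∈ Hx := by rw [hHxM]; exact hMcl z xs hxsM
    obtain ⟨h, hh, heq⟩ := hzxs
    have : z - h = 0 := by
      apply hxsinj
      rw [hsubl, heq, sub_self]
    have hz : z = h := sub_eq_zero.mp this
    rw [hz]
    exact hh
  -- construct inverses
  intro x hx
  have hTx : ∃ z : N, z * x = 1 := by
    set T : AddSubgroup N := mkSub {y : N | ∃ n : N, y = n * x}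
      (⟨0, (h0l x).symm⟩)
      (by rintro a b ⟨n, rfl⟩ ⟨n', rfl⟩; exact ⟨n + n', (hdist n n' x).symm⟩)
      (by rintro a ⟨n, rfl⟩; exact ⟨-n, (hnegl n x).symm⟩) with hTdef
    have h1 : (1 : N) ∈ T := by
      apply hbig
      · rintro n m ⟨n', rfl⟩
        exact ⟨n * n', (hassoc n n' x).symm⟩
      · intro hb
        have hmem : x ∈ T := ⟨1, (honel x).symm⟩
        rw [hb, AddSubgroup.mem_bot] at hmem
        exact hx hmem
    obtain ⟨z, hz⟩ := h1
    exact ⟨z, hz.symm⟩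
  obtain ⟨z, hzx⟩ := hTx
  have hzne : z ≠ 0 := by
    intro h
    rw [h, h0l] at hzx
    exact hnt hzx
  have hTz : ∃ w : N, w * z = 1 := by
    set T' : AddSubgroup N := mkSub {y : N | ∃ n : N, y = n * z}
      (⟨0, (h0l z).symm⟩)
      (by rintro a b ⟨n, rfl⟩ ⟨n', rfl⟩; exact ⟨n + n', (hdist n n' z).symm⟩)
      (by rintro a ⟨n, rfl⟩; exact ⟨-n, (hnegl n z).symm⟩) with hT'def
    have h1 : (1 : N) ∈ T' := by
      apply hbig
      · rintro n m ⟨n', rfl⟩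
        exact ⟨n * n', (hassoc n n' z).symm⟩
      · intro hb
        have hmem : z ∈ T' := ⟨1, (honel z).symm⟩
        rw [hb, AddSubgroup.mem_bot] at hmem
        exact hzne hmem
    obtain ⟨w, hw⟩ := h1
    exact ⟨w, hw.symm⟩
  obtain ⟨w, hwz⟩ := hTz
  have hwx : w = x := by
    calc w = w * 1 := (honer w).symm
    _ = w * (z * x) := by rw [hzx]
    _ = (w * z) * x := (hassoc w z x).symm
    _ = 1 * x := by rw [hwz]
    _ = x := honel x
  refine ⟨z, ?_, hzx⟩
  rw [← hwx]
  exact hwz
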